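/- Let E be a real inner product space, let λ₁, λ₂ ∈ ℝ, D ≥ 0, G ≥ 0, κ_h > 0. Let x₁, x₂ : [0,∞) → E be differentiable curves, let h : [0,∞) → ℝ be the (differentiable) barrier value along the trajectory, and let g₁, g₂ : [0,∞) → E represent the gradients of the barrier function along the trajectory with ‖g₂(t)‖ ≤ G and g₂(t) ≠ 0 for all t. Let δ, υ : [0,∞) → E with ‖δ(t)‖ ≤ D for all t. Define φ₀(t) = ⟨g₁(t), x₂(t)⟩ + ⟨g₂(t), −(λ₁ + λ₂)x₂(t) − λ₁λ₂x₁(t)⟩ + κ_h·h(t). Assume for all t ≥ 0: x₁′(t) = x₂(t), x₂′(t) = δ(t) − (λ₁ + λ₂)x₂(t) − λ₁λ₂x₁(t) + υ(t) + max(0, −φ₀(t) − ⟨g₂(t), υ(t)⟩)·g₂(t)/‖g₂(t)‖², and that the chain rule holds: h′(t) = ⟨g₁(t), x₁′(t)⟩ + ⟨g₂(t), x₂′(t)⟩. If h(0) ≥ −D·G/κ_h, then h(t) ≥ −D·G/κ_h for all t ≥ 0. -/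

import Mathlib

open scoped RealInnerProductSpace

/-- Robust forward invariance (safety) of Theorem 2: along the closed-loop
trajectory with the ReLU safety filter, the barrier value h never drops
below −D·G/κ_h if it starts above it. -/
theorem cbf_forward_invariance
    {E : Type*} [NormedAddCommGroup E] [InnerProductSpace ℝ E]
    (l₁ l₂ D G κh : ℝ) (hD : 0 ≤ D) (hG : 0 ≤ G) (hκh : 0 < κh)
    (x₁ x₂ δ υ : ℝ → E) (h : ℝ → ℝ) (g₁ g₂ : ℝ → E)
    (hg₂_bound : ∀ t, 0 ≤ t → ‖g₂ t‖ ≤ G)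
    (hg₂_ne : ∀ t, 0 ≤ t → g₂ t ≠ 0)
    (hδ : ∀ t, 0 ≤ t → ‖δ t‖ ≤ D)
    (φ₀ : ℝ → ℝ)
    (hφ₀ : ∀ t, φ₀ t = ⟪g₁ t, x₂ t⟫
      + ⟪g₂ t, -(l₁ + l₂) • x₂ t - (l₁ * l₂) • x₁ t⟫ + κh * h t)
    (x₁' x₂' : ℝ → E)
    (hx₁ : ∀ t, 0 ≤ t → HasDerivAt x₁ (x₁' t) t)
    (hx₂ : ∀ t, 0 ≤ t → HasDerivAt x₂ (x₂' t) t)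
    (hx₁'_eq : ∀ t, 0 ≤ t → x₁' t = x₂ t)
    (hx₂'_eq : ∀ t, 0 ≤ t → x₂' t =
      δ t - (l₁ + l₂) • x₂ t - (l₁ * l₂) • x₁ t + υ t
        + (max 0 (-φ₀ t - ⟪g₂ t, υ t⟫) / ‖g₂ t‖ ^ 2) • g₂ t)
    -- the chain rule holds for the barrier value along the trajectory
    (hh_deriv : ∀ t, 0 ≤ t →
      HasDerivAt h (⟪g₁ t, x₁' t⟫ + ⟪g₂ t, x₂' t⟫) t)
    (h_init : h 0 ≥ -(D * G) / κh) :
    ∀ t, 0 ≤ t → h t ≥ -(D * G) / κh := by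
  set c : ℝ := D * G / κh with hc
  have hderiv_ge : ∀ s, 0 ≤ s →
      -(κh * h s) - D * G ≤ ⟪g₁ s, x₁' s⟫ + ⟪g₂ s, x₂' s⟫ := by
    intro s hs
    have hg2 : ‖g₂ s‖ ^ 2 ≠ 0 := by
      exact pow_ne_zero 2 (norm_ne_zero_iff.mpr (hg₂_ne s hs))
    have hx2' : x₂' s = δ s + (-(l₁ + l₂) • x₂ s - (l₁ * l₂) • x₁ s) + υ s
        + (max 0 (-φ₀ s - ⟪g₂ s, υ s⟫) / ‖g₂ s‖ ^ 2) • g₂ s := by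
      rw [hx₂'_eq s hs, neg_smul]; abel
    have hexp : ⟪g₂ s, x₂' s⟫ = ⟪g₂ s, δ s⟫
        + ⟪g₂ s, -(l₁ + l₂) • x₂ s - (l₁ * l₂) • x₁ s⟫ + ⟪g₂ s, υ s⟫
        + max 0 (-φ₀ s - ⟪g₂ s, υ s⟫) := by
      rw [hx2', inner_add_right, inner_add_right, inner_add_right,
        real_inner_smul_right, real_inner_self_eq_norm_sq,
        div_mul_cancel₀ _ hg2]
    have h1 := abs_real_inner_le_norm (g₂ s) (δ s)
    have h2 : ‖g₂ s‖ * ‖δ s‖ ≤ G * D :=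
      mul_le_mul (hg₂_bound s hs) (hδ s hs) (norm_nonneg _) hG
    have h3 := (abs_le.mp (h1.trans h2)).1
    have hmax := le_max_right (0 : ℝ) (-φ₀ s - ⟪g₂ s, υ s⟫)
    have hφ := hφ₀ s
    have hcomm : G * D = D * G := mul_comm _ _
    rw [hx₁'_eq s hs, hexp]
    linarith
  have hw : ∀ s, 0 ≤ s → HasDerivAt (fun τ => (h τ + c) * Real.exp (κh * τ))
      ((⟪g₁ s, x₁' s⟫ + ⟪g₂ s, x₂' s⟫ + κh * (h s + c)) * Real.exp (κh * s)) s := by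
    intro s hs
    have h1 : HasDerivAt (fun τ => h τ + c) (⟪g₁ s, x₁' s⟫ + ⟪g₂ s, x₂' s⟫) s :=
      (hh_deriv s hs).add_const c
    have h2 : HasDerivAt (fun τ => Real.exp (κh * τ)) (κh * Real.exp (κh * s)) s := by
      have := (Real.hasDerivAt_exp (κh * s)).comp s ((hasDerivAt_id s).const_mul κh)
      simpa [mul_comm, Function.comp_def] using this
    have : HasDerivAt (fun τ => (h τ + c) * Real.exp (κh * τ)) _ s := h1.mul h2
    convert this using 1
    ring
  have hmono : MonotoneOn (fun τ => (h τ + c) * Real.exp (κh * τ)) (Set.Ici 0) := by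
    apply monotoneOn_of_deriv_nonneg (convex_Ici 0)
    · intro s hs
      exact ((hw s hs).continuousAt).continuousWithinAt
    · intro s hs
      rw [interior_Ici] at hs
      exact (hw s hs.le).differentiableAt.differentiableWithinAt
    · intro s hs
      rw [interior_Ici] at hs
      rw [(hw s hs.le).deriv]
      have hge := hderiv_ge s hs.le
      have hcc : κh * c = D * G := by
        rw [hc]; field_simp
      have hmul : κh * (h s + c) = κh * h s + κh * c := mul_add _ _ _
      have hnn : 0 ≤ ⟪g₁ s, x₁' s⟫ + ⟪g₂ s, x₂' s⟫ + κh * (h s + c) := by linarith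
      exact mul_nonneg hnn (Real.exp_pos _).le
  intro t ht
  have hle := hmono Set.self_mem_Ici ht ht
  have h0 : 0 ≤ (h 0 + c) * Real.exp (κh * 0) := by
    have hinit : -(D * G / κh) ≤ h 0 := by
      rw [← neg_div]; exact h_init
    have : 0 ≤ h 0 + c := by rw [hc]; linarith
    simpa using this
  have hwt : 0 ≤ (h t + c) * Real.exp (κh * t) := le_trans h0 hle
  have hpos := Real.exp_pos (κh * t)
  have hct : 0 ≤ h t + c := (mul_nonneg_iff_of_pos_right hpos).mp hwt
  rw [ge_iff_le, neg_div]
  rw [hc] at hct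
  linarith
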